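/- arXiv:1801.00838 — 2 statements merged into one kernel-verified Lean document; each statement's English description precedes it below -/
import Mathlib

section
/- Let ξ₁,…,ξₙ be distinct real numbers, σ₁,…,σₙ real numbers, and c₁,…,cₙ nonzero complex numbers. Then the function f(y) = ∑_{j=1}^n c_j·y^{σ_j + i·ξ_j} belongs to L²([1,∞), dy/y²) if and only if σ_j < 1/2 for every j. -/
open scoped Interval
open Complex MeasureTheory Set Real Filter

noncomputable section

/-- The completed Riemann zeta function `ξ(s) = π^{-s/2} Γ(s/2) ζ(s)`. -/
def xi (s : ℂ) : ℂ := (π : ℂ) ^ (-s / 2) * Complex.Gamma (s / 2) * riemannZeta s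

/-- `c_s = ξ(2-2s)/ξ(2s)`. -/
def cc (s : ℂ) : ℂ := xi (2 - 2 * s) / xi (2 * s)

/-- The real-analytic Eisenstein series for `SL₂(ℤ)`:
`E_s(z) = (1/2) ∑_{coprime (c,d)} (Im z / |cz+d|²)^s`. -/
def Eis (s z : ℂ) : ℂ :=
  (1 / 2) * ∑' p : {p : ℤ × ℤ // IsCoprime p.1 p.2},
    ((z.im / ‖(p.1.1 : ℂ) * z + (p.1.2 : ℂ)‖ ^ 2 : ℝ) : ℂ) ^ s

/-- The summand of the Arthur truncation: `u^s` for `u < T`, `-c_s u^{1-s}` for `u ≥ T`. -/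
def hTrunc (T : ℝ) (s : ℂ) (u : ℝ) : ℂ :=
  if u < T then (u : ℂ) ^ s else -(cc s) * (u : ℂ) ^ (1 - s)

/-- Arthur truncation `∧^T E_s` of the Eisenstein series. -/
def truncEis (T : ℝ) (s z : ℂ) : ℂ :=
  (1 / 2) * ∑' p : {p : ℤ × ℤ // IsCoprime p.1 p.2},
    hTrunc T s (z.im / ‖(p.1.1 : ℂ) * z + (p.1.2 : ℂ)‖ ^ 2)

/-- The standard fundamental domain for `SL₂(ℤ)`, as a subset of `ℝ × ℝ` via `z = x + iy`. -/
def FD : Set (ℝ × ℝ) := {p | 0 < p.2 ∧ 1 ≤ p.1 ^ 2 + p.2 ^ 2 ∧ |p.1| ≤ 1 / 2}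

/-- The Whittaker function `W_s(y) = √y ∫₀^∞ t^{s-1/2} e^{-(t+1/t)πy} dt/t`. -/
def Whit (s : ℂ) (y : ℝ) : ℂ :=
  (Real.sqrt y : ℂ) *
    ∫ t in Ioi (0 : ℝ), (t : ℂ) ^ (s - 1 / 2) * Complex.exp (-(((t : ℂ) + 1 / t) * π * y)) / t

/-- `σ_w(m) = ∑_{0<d∣m} d^w` with complex powers. -/
def sigmaC (w : ℂ) (m : ℕ) : ℂ := ∑ d ∈ m.divisors, (d : ℂ) ^ w

/-- `φ(n,s) = π^s σ_{2s-1}(|n|) / (Γ(s) ζ(2s) |n|^{s-1/2})`. -/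
def phiC (n : ℤ) (s : ℂ) : ℂ :=
  (π : ℂ) ^ s * sigmaC (2 * s - 1) n.natAbs /
    (Complex.Gamma s * riemannZeta (2 * s) * ((n.natAbs : ℝ) : ℂ) ^ (s - 1 / 2))


lemma contOn (w : ℂ) : ContinuousOn (fun y : ℝ => (y:ℂ) ^ w) {y : ℝ | 0 < y} := fun x hx =>
  (Complex.continuousAt_ofReal_cpow_const x w (Or.inr (ne_of_gt hx))).continuousWithinAt

lemma memaux (g : ℝ → ℂ) (hg : AEStronglyMeasurable g (volume.restrict (Ici (1:ℝ)))) :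
    MemLp g 2 ((volume.restrict (Ici (1 : ℝ))).withDensity fun y => ENNReal.ofReal (1 / y ^ 2)) ↔
      IntegrableOn (fun y => ‖g y‖^2 * (1/y^2)) (Ici 1) volume := by
  have hmeas : Measurable fun y:ℝ => ENNReal.ofReal (1/y^2) :=
    (measurable_const.div (measurable_id.pow_const 2)).ennreal_ofReal
  rw [memLp_two_iff_integrable_sq_norm (hg.mono_ac (withDensity_absolutelyContinuous _ _)),
    integrable_withDensity_iff hmeas (Eventually.of_forall fun _ => ENNReal.ofReal_lt_top)]
  unfold IntegrableOn
  refine integrable_congr (Eventually.of_forall fun y => ?_)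
  simp only []
  rw [ENNReal.toReal_ofReal (by positivity)]


lemma expand (n : ℕ) (w : Fin n → ℂ) (c : Fin n → ℂ) (j : Fin n)
    (hne : ∀ k, k ≠ j → w k ≠ w j) {X : ℝ} (hX : 1 < X) :
    ∫ y in (1:ℝ)..X, (∑ k, c k * (y:ℂ) ^ (w k)) * (y:ℂ)^(-(w j) - 1)
      = c j * Real.log X
        + ∑ k ∈ Finset.univ.erase j, c k * (((X:ℂ)^(w k - w j) - 1)/(w k - w j)) := by
  have h0 : (0:ℝ) ∉ (Set.uIcc 1 X) := by
    rw [uIcc_of_le hX.le]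
    intro h; exact absurd h.1 (by norm_num)
  have hcong : ∀ y ∈ (Set.uIcc 1 X), (∑ k, c k * (y:ℂ) ^ (w k)) * (y:ℂ)^(-(w j) - 1)
      = ∑ k, c k * (y:ℂ) ^ (w k - w j - 1) := by
    intro y hy
    rw [uIcc_of_le hX.le] at hy
    have hy0 : (y:ℂ) ≠ 0 := by
      exact_mod_cast ne_of_gt (lt_of_lt_of_le one_pos hy.1)
    rw [Finset.sum_mul]
    refine Finset.sum_congr rfl fun k _ => ?_
    rw [mul_assoc, ← Complex.cpow_add _ _ hy0]
    ring_nf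
  rw [intervalIntegral.integral_congr hcong,
    intervalIntegral.integral_finset_sum (fun k _ =>
      (intervalIntegral.intervalIntegrable_cpow (Or.inr h0)).const_mul (c k))]
  simp_rw [intervalIntegral.integral_const_mul]
  rw [← Finset.add_sum_erase _ _ (Finset.mem_univ j)]
  congr 1
  · congr 1
    rw [sub_self, zero_sub]
    have : ∀ y : ℝ, y ∈ (Set.uIcc 1 X) → (y:ℂ) ^ (-1 : ℂ) = ((y⁻¹ : ℝ) : ℂ) := by
      intro y hy
      rw [uIcc_of_le hX.le] at hy
      rw [Complex.cpow_neg_one, Complex.ofReal_inv]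
    rw [intervalIntegral.integral_congr this, intervalIntegral.integral_ofReal,
      integral_inv h0, div_one]
  · refine Finset.sum_congr rfl fun k hk => ?_
    congr 1
    have hr : w k - w j - 1 ≠ -1 := by
      intro h
      exact hne k (Finset.ne_of_mem_erase hk) (by linear_combination h)
    rw [integral_cpow (Or.inr ⟨hr, h0⟩)]
    rw [sub_add_cancel]
    norm_num


lemma upper (n : ℕ) (w : Fin n → ℂ) (c : Fin n → ℂ) (j : Fin n)
    (hσ : (1:ℝ)/2 ≤ (w j).re) {X : ℝ} (hX : 1 < X)
    (hInt : IntegrableOn (fun y : ℝ => ‖∑ k, c k * (y:ℂ)^(w k)‖^2 * (1/y^2)) (Ici 1) volume) :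
    ‖∫ y in (1:ℝ)..X, (∑ k, c k * (y:ℂ)^(w k)) * (y:ℂ)^(-(w j) - 1)‖
      ≤ Real.sqrt (∫ y in Ici (1:ℝ), ‖∑ k, c k * (y:ℂ)^(w k)‖^2 * (1/y^2))
        * Real.sqrt (Real.log X) := by
  set f : ℝ → ℂ := fun y => ∑ k, c k * (y:ℂ)^(w k) with hf
  set σ : ℝ := (w j).re with hσdef
  set M : ℝ := ∫ y in Ici (1:ℝ), ‖f y‖^2 * (1/y^2) with hM
  have hM0 : 0 ≤ M := setIntegral_nonneg measurableSet_Ici (fun y _ => by positivity)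
  have hlog0 : 0 ≤ Real.log X := Real.log_nonneg hX.le
  -- continuity of f on positive reals
  have hfc : ContinuousOn f {y : ℝ | 0 < y} := by
    refine continuousOn_finset_sum _ fun k _ => continuousOn_const.mul ?_
    exact fun x hx => (Complex.continuousAt_ofReal_cpow_const x _
      (Or.inr (ne_of_gt hx))).continuousWithinAt
  have hsub : Ioc (1:ℝ) X ⊆ {y : ℝ | 0 < y} := fun y hy => lt_trans one_pos hy.1
  haveI : IsFiniteMeasure (volume.restrict (Ioc (1:ℝ) X)) :=
    ⟨by rw [Measure.restrict_apply_univ]; exact measure_Ioc_lt_top⟩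
  have hfm : AEStronglyMeasurable f (volume.restrict (Ioc (1:ℝ) X)) :=
    (hfc.mono hsub).aestronglyMeasurable measurableSet_Ioc
  -- step 1 : bound by integral of norm, as set integral over Ioc
  have step1 : ‖∫ y in (1:ℝ)..X, f y * (y:ℂ)^(-(w j) - 1)‖
      ≤ ∫ y in Ioc (1:ℝ) X, (‖f y‖/y) * y ^ (-σ) := by
    refine le_trans (intervalIntegral.norm_integral_le_integral_norm hX.le) (le_of_eq ?_)
    rw [intervalIntegral.integral_of_le hX.le]
    refine setIntegral_congr_fun measurableSet_Ioc fun y hy => ?_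
    have hy0 : (0:ℝ) < y := hsub hy
    rw [norm_mul, Complex.norm_cpow_eq_rpow_re_of_pos hy0]
    have : (-(w j) - 1).re = -σ + (-1) := by simp [hσdef]; ring
    rw [this, Real.rpow_add hy0, Real.rpow_neg_one]
    ring
  -- Hölder
  have hpq : Real.HolderConjugate 2 2 := Real.HolderConjugate.two_two
  have h2 : ENNReal.ofReal (2:ℝ) = 2 := by norm_num
  have hF : MemLp (fun y => ‖f y‖/y) (ENNReal.ofReal (2:ℝ)) (volume.restrict (Ioc (1:ℝ) X)) := by
    rw [h2]
    refine MemLp.of_bound ((hfm.norm.aemeasurable.div aemeasurable_id).aestronglyMeasurable)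
      (∑ k, ‖c k‖ * max (X ^ ((w k).re - 1)) 1) ?_
    rw [ae_restrict_iff' measurableSet_Ioc]
    refine Eventually.of_forall fun y hy => ?_
    have hy0 : (0:ℝ) < y := hsub hy
    have hy1 : (1:ℝ) ≤ y := hy.1.le
    rw [Real.norm_of_nonneg (by positivity)]
    have h1 : ‖f y‖ ≤ ∑ k, ‖c k‖ * y ^ ((w k).re) := by
      refine (norm_sum_le _ _).trans (Finset.sum_le_sum fun k _ => ?_)
      rw [norm_mul, Complex.norm_cpow_eq_rpow_re_of_pos hy0]
    calc ‖f y‖ / y ≤ (∑ k, ‖c k‖ * y ^ ((w k).re)) / y := by gcongr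
      _ = ∑ k, ‖c k‖ * y ^ ((w k).re - 1) := by
          rw [Finset.sum_div]
          refine Finset.sum_congr rfl fun k _ => ?_
          rw [Real.rpow_sub hy0, Real.rpow_one, mul_div_assoc]
      _ ≤ ∑ k, ‖c k‖ * max (X ^ ((w k).re - 1)) 1 := by
          refine Finset.sum_le_sum fun k _ => mul_le_mul_of_nonneg_left ?_ (norm_nonneg _)
          rcases le_or_gt 0 ((w k).re - 1) with h | h
          · exact le_max_of_le_left (Real.rpow_le_rpow hy0.le hy.2 h)
          · exact le_max_of_le_right (Real.rpow_le_one_of_one_le_of_nonpos hy1 h.le)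
  have hG : MemLp (fun y : ℝ => y ^ (-σ)) (ENNReal.ofReal (2:ℝ)) (volume.restrict (Ioc (1:ℝ) X)) := by
    rw [h2]
    refine MemLp.of_bound ?_ 1 ?_
    · refine (ContinuousOn.aestronglyMeasurable ?_ measurableSet_Ioc)
      exact fun y hy => (Real.continuousAt_rpow_const y _ (Or.inl (ne_of_gt (hsub hy)))).continuousWithinAt
    · rw [ae_restrict_iff' measurableSet_Ioc]
      refine Eventually.of_forall fun y hy => ?_
      rw [Real.norm_of_nonneg (Real.rpow_nonneg (hsub hy).le _)]
      exact Real.rpow_le_one_of_one_le_of_nonpos hy.1.le (by linarith)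
  have holder := MeasureTheory.integral_mul_le_Lp_mul_Lq_of_nonneg hpq
    ((ae_restrict_iff' measurableSet_Ioc).mpr (Eventually.of_forall fun y hy =>
      div_nonneg (norm_nonneg _) (hsub hy).le))
    ((ae_restrict_iff' measurableSet_Ioc).mpr (Eventually.of_forall fun y hy =>
      Real.rpow_nonneg (hsub hy).le _)) hF hG
  -- bound factor A
  have hIoc : Ioc (1:ℝ) X ⊆ Ici 1 := fun y hy => hy.1.le
  have hA : ∫ y in Ioc (1:ℝ) X, (‖f y‖/y) ^ (2:ℝ) ≤ M := by
    have hcg : ∀ y ∈ Ioc (1:ℝ) X, (‖f y‖/y) ^ (2:ℝ) = ‖f y‖^2 * (1/y^2) := by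
      intro y hy
      have hy0 : (0:ℝ) < y := hsub hy
      rw [show ((2:ℝ)) = ((2:ℕ):ℝ) by norm_num, Real.rpow_natCast, div_pow]
      field_simp
    rw [setIntegral_congr_fun measurableSet_Ioc hcg]
    refine setIntegral_mono_set hInt ?_ (HasSubset.Subset.eventuallyLE hIoc)
    exact (ae_restrict_iff' measurableSet_Ici).mpr (Eventually.of_forall fun y _ => by positivity)
  have hA0 : 0 ≤ ∫ y in Ioc (1:ℝ) X, (‖f y‖/y) ^ (2:ℝ) :=
    setIntegral_nonneg measurableSet_Ioc fun y hy => Real.rpow_nonneg (div_nonneg (norm_nonneg _) (hsub hy).le) _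
  -- bound factor B
  have h0uIcc : (0:ℝ) ∉ Set.uIcc 1 X := by
    rw [uIcc_of_le hX.le]; intro h; exact absurd h.1 (by norm_num)
  have hB : ∫ y in Ioc (1:ℝ) X, (y ^ (-σ)) ^ (2:ℝ) ≤ Real.log X := by
    have hInt2 : IntegrableOn (fun y : ℝ => (y ^ (-σ)) ^ (2:ℝ)) (Ioc 1 X) volume := by
      rw [← intervalIntegrable_iff_integrableOn_Ioc_of_le hX.le]
      refine ContinuousOn.intervalIntegrable fun y hy => ?_
      have hy0 : y ≠ 0 := ne_of_mem_of_not_mem hy h0uIcc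
      exact (((Real.continuousAt_rpow_const y _ (Or.inl hy0)).rpow_const
        (Or.inr (by norm_num))).continuousWithinAt)
    have hInt3 : IntegrableOn (fun y : ℝ => y⁻¹) (Ioc 1 X) volume := by
      rw [← intervalIntegrable_iff_integrableOn_Ioc_of_le hX.le]
      exact intervalIntegrable_inv_iff.mpr (Or.inr h0uIcc)
    have hmono := setIntegral_mono_on hInt2 hInt3 measurableSet_Ioc (fun y hy => ?_)
    · refine hmono.trans (le_of_eq ?_)
      rw [← intervalIntegral.integral_of_le hX.le, integral_inv h0uIcc, div_one]
    · have hy0 : (0:ℝ) < y := hsub hy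
      rw [← Real.rpow_mul hy0.le]
      calc y ^ ((-σ) * 2) ≤ y ^ (-1:ℝ) :=
            Real.rpow_le_rpow_of_exponent_le hy.1.le (by linarith)
        _ = y⁻¹ := Real.rpow_neg_one y
  have hB0 : 0 ≤ ∫ y in Ioc (1:ℝ) X, (y ^ (-σ)) ^ (2:ℝ) :=
    setIntegral_nonneg measurableSet_Ioc fun y hy => Real.rpow_nonneg (Real.rpow_nonneg (hsub hy).le _) _
  refine step1.trans (holder.trans ?_)
  rw [Real.sqrt_eq_rpow, Real.sqrt_eq_rpow]
  exact mul_le_mul (Real.rpow_le_rpow hA0 hA (by norm_num))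
    (Real.rpow_le_rpow hB0 hB (by norm_num)) (Real.rpow_nonneg hB0 _) (Real.rpow_nonneg hM0 _)


lemma le_dir (n : ℕ) (w : Fin n → ℂ) (c : Fin n → ℂ) (hw : ∀ j, (w j).re < 1/2) :
    IntegrableOn (fun y : ℝ => ‖∑ j, c j * (y:ℂ) ^ (w j)‖^2 * (1/y^2)) (Ici 1) volume := by
  rcases Nat.eq_zero_or_pos n with hn | hn
  · subst hn
    simp only [Finset.univ_eq_empty, Finset.sum_empty, norm_zero]
    simpa using integrableOn_zero
  haveI : NeZero n := ⟨hn.ne'⟩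
  set a : ℝ := Finset.univ.sup' Finset.univ_nonempty (fun j => (w j).re) with ha
  have haj : ∀ j, (w j).re ≤ a := fun j => by rw [ha]; exact Finset.le_sup' (fun j => (w j).re) (Finset.mem_univ j)
  have ha2 : a < 1/2 := by
    rw [ha, Finset.sup'_lt_iff]
    exact fun j _ => hw j
  set C : ℝ := ∑ j, ‖c j‖ with hC
  have hC0 : 0 ≤ C := Finset.sum_nonneg fun j _ => norm_nonneg _
  -- majorant integrable
  have hmaj : IntegrableOn (fun y : ℝ => C^2 * y ^ (2*a - 2)) (Ici 1) volume := by
    rw [integrableOn_Ici_iff_integrableOn_Ioi]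
    exact ((integrableOn_Ioi_rpow_iff one_pos).mpr (by linarith)).const_mul _
  -- measurability
  have hfc : ContinuousOn (fun y : ℝ => ∑ j, c j * (y:ℂ) ^ (w j)) {y : ℝ | 0 < y} := by
    refine continuousOn_finset_sum _ fun k _ => continuousOn_const.mul ?_
    exact fun x hx => (Complex.continuousAt_ofReal_cpow_const x _
      (Or.inr (ne_of_gt hx))).continuousWithinAt
  have hsub : Ici (1:ℝ) ⊆ {y : ℝ | 0 < y} := fun y hy => show (0:ℝ) < y from lt_of_lt_of_le one_pos (mem_Ici.mp hy)
  have hfm : AEStronglyMeasurable (fun y : ℝ => ∑ j, c j * (y:ℂ) ^ (w j))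
      (volume.restrict (Ici 1)) := (hfc.mono hsub).aestronglyMeasurable measurableSet_Ici
  refine Integrable.mono' hmaj
    (((hfm.norm.aemeasurable.pow_const 2).mul
      ((measurable_const.div (measurable_id.pow_const 2)).aemeasurable)).aestronglyMeasurable) ?_
  rw [ae_restrict_iff' measurableSet_Ici]
  refine Eventually.of_forall fun y hy => ?_
  have hy0 : (0:ℝ) < y := hsub hy
  have hy1 : (1:ℝ) ≤ y := hy
  have h1 : ‖∑ j, c j * (y:ℂ) ^ (w j)‖ ≤ C * y ^ a := by
    refine (norm_sum_le _ _).trans ?_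
    rw [hC, Finset.sum_mul]
    refine Finset.sum_le_sum fun k _ => ?_
    rw [norm_mul, Complex.norm_cpow_eq_rpow_re_of_pos hy0]
    exact mul_le_mul_of_nonneg_left (Real.rpow_le_rpow_of_exponent_le hy1 (haj k)) (norm_nonneg _)
  rw [Real.norm_of_nonneg (by positivity)]
  calc ‖∑ j, c j * (y:ℂ) ^ (w j)‖^2 * (1/y^2) ≤ (C * y ^ a)^2 * (1/y^2) := by
        gcongr
    _ = C^2 * y ^ (2*a - 2) := by
        rw [mul_pow, ← Real.rpow_natCast (y ^ a) 2, ← Real.rpow_mul hy0.le,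
          Real.rpow_sub hy0, ← Real.rpow_natCast y 2]
        push_cast
        rw [mul_comm a 2]
        ring


lemma lower (n : ℕ) (w : Fin n → ℂ) (c : Fin n → ℂ) (j : Fin n)
    (hmax : ∀ k, (w k).re ≤ (w j).re) {X : ℝ} (hX : 1 < X) :
    ‖c j‖ * Real.log X ≤
      ‖c j * (Real.log X : ℂ) + ∑ k ∈ Finset.univ.erase j,
          c k * (((X:ℂ)^(w k - w j) - 1)/(w k - w j))‖
        + ∑ k ∈ Finset.univ.erase j, ‖c k‖ * (2/‖w k - w j‖) := by
  have hR : ‖∑ k ∈ Finset.univ.erase j, c k * (((X:ℂ)^(w k - w j) - 1)/(w k - w j))‖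
      ≤ ∑ k ∈ Finset.univ.erase j, ‖c k‖ * (2/‖w k - w j‖) := by
    refine (norm_sum_le _ _).trans (Finset.sum_le_sum fun k hk => ?_)
    rw [norm_mul, norm_div]
    refine mul_le_mul_of_nonneg_left ?_ (norm_nonneg _)
    have h2 : ‖(X:ℂ)^(w k - w j) - 1‖ ≤ 2 := by
      refine (norm_sub_le _ _).trans ?_
      rw [Complex.norm_cpow_eq_rpow_re_of_pos (lt_trans one_pos hX),
        norm_one]
      have hre : ((w k - w j).re) ≤ 0 := by
        rw [Complex.sub_re]; linarith [hmax k]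
      linarith [Real.rpow_le_one_of_one_le_of_nonpos hX.le hre]
    gcongr
  calc ‖c j‖ * Real.log X = ‖c j * ((Real.log X : ℝ) : ℂ)‖ := by
        rw [norm_mul, Complex.norm_real, Real.norm_of_nonneg (Real.log_nonneg hX.le)]
    _ = ‖(c j * ((Real.log X : ℝ) : ℂ) + ∑ k ∈ Finset.univ.erase j,
          c k * (((X:ℂ)^(w k - w j) - 1)/(w k - w j)))
          - ∑ k ∈ Finset.univ.erase j, c k * (((X:ℂ)^(w k - w j) - 1)/(w k - w j))‖ := by
        rw [add_sub_cancel_right]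
    _ ≤ _ := (norm_sub_le _ _).trans (add_le_add le_rfl hR)

theorem stmt1 (n : ℕ) (xiv : Fin n → ℝ) (hxiv : Function.Injective xiv)
    (sigv : Fin n → ℝ) (c : Fin n → ℂ) (hc : ∀ j, c j ≠ 0) :
    MemLp (fun y : ℝ => ∑ j, c j * (y : ℂ) ^ ((sigv j : ℂ) + (xiv j : ℂ) * I)) 2
      ((volume.restrict (Ici (1 : ℝ))).withDensity fun y => ENNReal.ofReal (1 / y ^ 2)) ↔
      ∀ j, sigv j < 1 / 2 := by
  have hfm : AEStronglyMeasurable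
      (fun y : ℝ => ∑ j, c j * (y:ℂ) ^ ((sigv j : ℂ) + (xiv j : ℂ) * I))
      (volume.restrict (Ici 1)) := by
    refine (ContinuousOn.mono ?_
      (fun y (hy : y ∈ Ici (1:ℝ)) => show y ∈ {y : ℝ | 0 < y} from lt_of_lt_of_le one_pos (mem_Ici.mp hy))).aestronglyMeasurable
      measurableSet_Ici
    refine continuousOn_finset_sum _ fun k _ => continuousOn_const.mul ?_
    exact fun x hx => (Complex.continuousAt_ofReal_cpow_const x _
      (Or.inr (ne_of_gt hx))).continuousWithinAt
  rw [memaux _ hfm]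
  constructor
  · intro hInt j
    by_contra hj
    push_neg at hj
    obtain ⟨j0, -, hj0⟩ := Finset.exists_max_image Finset.univ sigv ⟨j, Finset.mem_univ j⟩
    set w : Fin n → ℂ := fun k => (sigv k : ℂ) + (xiv k : ℂ) * I with hw
    have hwre : ∀ k, (w k).re = sigv k := fun k => by simp [hw]
    have hσ : (1:ℝ)/2 ≤ (w j0).re := by
      rw [hwre]; exact le_trans hj (hj0 j (Finset.mem_univ j))
    have hmax : ∀ k, (w k).re ≤ (w j0).re := fun k => by
      rw [hwre, hwre]; exact hj0 k (Finset.mem_univ k)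
    have hne : ∀ k, k ≠ j0 → w k ≠ w j0 := by
      intro k hk h
      apply hk; apply hxiv
      have := congrArg Complex.im h
      simpa [hw] using this
    set M : ℝ := ∫ y in Ici (1:ℝ), ‖∑ k, c k * (y:ℂ)^(w k)‖^2 * (1/y^2) with hM
    set B : ℝ := ∑ k ∈ Finset.univ.erase j0, ‖c k‖ * (2/‖w k - w j0‖) with hB
    have hB0 : 0 ≤ B := Finset.sum_nonneg fun k _ => by positivity
    have hM0 : 0 ≤ M := setIntegral_nonneg measurableSet_Ici fun y _ => by positivity
    have key : ∀ X : ℝ, 1 < X →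
        ‖c j0‖ * Real.log X ≤ B + Real.sqrt M * Real.sqrt (Real.log X) := by
      intro X hX
      have h1 := expand n w c j0 hne hX
      have h2 := upper n w c j0 hσ hX hInt
      have h3 := lower n w c j0 hmax hX
      rw [h1] at h2
      rw [← hB, ← hM] at *
      linarith
    set K := ‖c j0‖ with hK
    have hK0 : 0 < K := norm_pos_iff.mpr (hc j0)
    set s : ℝ := max 1 ((B + Real.sqrt M + 1)/K) with hs
    have hs1 : (1:ℝ) ≤ s := le_max_left _ _
    have hs0 : (0:ℝ) ≤ s := by linarith
    have hsK : B + Real.sqrt M + 1 ≤ K * s := by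
      calc B + Real.sqrt M + 1 = K * ((B + Real.sqrt M + 1)/K) := by field_simp
        _ ≤ K * s := mul_le_mul_of_nonneg_left (le_max_right _ _) hK0.le
    have hX : 1 < Real.exp (s^2) := by
      rw [← Real.exp_zero]
      exact Real.exp_lt_exp.mpr (by nlinarith)
    have hkey := key _ hX
    rw [Real.log_exp, Real.sqrt_sq hs0] at hkey
    nlinarith [Real.sqrt_nonneg M, mul_le_mul_of_nonneg_right hsK hs0,
      mul_le_mul_of_nonneg_left hs1 hB0]
  · intro hσall
    exact le_dir n (fun k => (sigv k : ℂ) + (xiv k : ℂ) * I) c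
      (fun k => by simpa using hσall k)
end
end

section
/- Let ξ₁,…,ξₙ be distinct real numbers and c₁,…,cₙ complex numbers, not all zero. Then the function f(y) = ∑_{j=1}^n c_j·y^{1/2 + i·ξ_j} is NOT in L²([1,∞), dy/y²); that is, ∫₁^∞ |∑_j c_j y^{1/2+iξ_j}|² y^{-2} dy = ∞. -/
open Complex MeasureTheory Set Real Filter
open Topology

noncomputable section

private lemma conj_ofReal_cpow {y : ℝ} (hy : 0 ≤ y) (w : ℂ) :
    (starRingEnd ℂ) ((y : ℂ) ^ w) = (y : ℂ) ^ ((starRingEnd ℂ) w) := by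
  have harg : ((y : ℂ)).arg ≠ π := by
    rw [Complex.arg_ofReal_of_nonneg hy]
    exact Real.pi_ne_zero.symm
  have h := Complex.conj_cpow (y : ℂ) ((starRingEnd ℂ) w) harg
  rw [Complex.conj_ofReal, Complex.conj_conj] at h
  rw [← h]

private lemma cpow_int_aux {Y : ℝ} (α : ℝ) (hY : 1 ≤ Y) :
    ∫ y in (1:ℝ)..Y, (y:ℂ) ^ ((α:ℂ) * I - 1) =
      if α = 0 then ((Real.log Y : ℝ) : ℂ)
      else ((Y:ℂ) ^ ((α:ℂ) * I) - 1) / ((α:ℂ) * I) := by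
  have h0 : (0:ℝ) ∉ Set.uIcc 1 Y := by
    rw [Set.uIcc_of_le hY]
    rintro ⟨h1, -⟩; linarith
  split_ifs with hα
  · subst hα
    simp only [Complex.ofReal_zero, zero_mul, zero_sub]
    simp_rw [Complex.cpow_neg_one, ← Complex.ofReal_inv]
    rw [intervalIntegral.integral_ofReal, integral_inv h0, div_one]
  · have hαI : (α:ℂ) * I ≠ 0 := by
      simp [Complex.ofReal_eq_zero, Complex.I_ne_zero, hα]
    rw [integral_cpow (Or.inr ⟨fun h => hαI (by linear_combination h), h0⟩)]
    have h1 : (α:ℂ) * I - 1 + 1 = (α:ℂ) * I := by ring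
    rw [h1]
    norm_num

private lemma pointwise_eq {n : ℕ} (xiv : Fin n → ℝ) (c : Fin n → ℂ) {y : ℝ} (hy : 1 ≤ y) :
    ‖∑ j, c j * (y : ℂ) ^ ((1 / 2 : ℂ) + (xiv j : ℂ) * I)‖ ^ 2 / y ^ 2 =
      (∑ j, ∑ k, c j * (starRingEnd ℂ) (c k) *
        (y : ℂ) ^ (((xiv j - xiv k : ℝ) : ℂ) * I - 1)).re := by
  have hy0 : (0:ℝ) < y := lt_of_lt_of_le one_pos hy
  have hyne : (y:ℂ) ≠ 0 := by exact_mod_cast ne_of_gt hy0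
  set S := ∑ j, c j * (y : ℂ) ^ ((1 / 2 : ℂ) + (xiv j : ℂ) * I) with hS
  have key : (S * (starRingEnd ℂ) S) / ((y:ℂ) ^ (2:ℕ)) =
      ∑ j, ∑ k, c j * (starRingEnd ℂ) (c k) *
        (y : ℂ) ^ (((xiv j - xiv k : ℝ) : ℂ) * I - 1) := by
    rw [hS, map_sum, Finset.sum_mul_sum, Finset.sum_div]
    refine Finset.sum_congr rfl fun j _ => ?_
    rw [Finset.sum_div]
    refine Finset.sum_congr rfl fun k _ => ?_
    rw [map_mul, conj_ofReal_cpow hy0.le]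
    have e1 : (starRingEnd ℂ) ((1/2 : ℂ) + (xiv k:ℂ) * I) = (1/2 : ℂ) - (xiv k:ℂ)*I := by
      simp only [map_add, map_mul, map_div₀, map_one, Complex.conj_ofReal, Complex.conj_I,
        map_ofNat]
      ring
    rw [e1]
    rw [show (c j * (y:ℂ)^((1/2:ℂ) + (xiv j:ℂ)*I)) *
          ((starRingEnd ℂ) (c k) * (y:ℂ)^((1/2:ℂ) - (xiv k:ℂ)*I))
        = c j * (starRingEnd ℂ) (c k) *
          ((y:ℂ)^((1/2:ℂ) + (xiv j:ℂ)*I) * (y:ℂ)^((1/2:ℂ) - (xiv k:ℂ)*I)) by ring]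
    rw [← Complex.cpow_add _ _ hyne, mul_div_assoc, ← Complex.cpow_natCast (y:ℂ) 2,
        ← Complex.cpow_sub _ _ hyne]
    congr 2
    push_cast
    ring
  rw [← key, Complex.mul_conj]
  rw [show ((y:ℂ)^(2:ℕ)) = ((y^2 : ℝ) : ℂ) by push_cast; ring]
  rw [← Complex.ofReal_div, Complex.ofReal_re, Complex.sq_norm]


private lemma intervalIntegrable_fun_sum {ι : Type*} (s : Finset ι) {f : ι → ℝ → ℂ} {a b : ℝ}
    (h : ∀ i ∈ s, IntervalIntegrable (f i) volume a b) :
    IntervalIntegrable (fun y => ∑ i ∈ s, f i y) volume a b := by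
  have hs := IntervalIntegrable.sum s h
  rwa [show (∑ i ∈ s, f i) = fun y => ∑ i ∈ s, f i y from funext fun y => Finset.sum_apply y s f]
    at hs

set_option maxHeartbeats 1000000 in
theorem stmt2 (n : ℕ) (xiv : Fin n → ℝ) (hxiv : Function.Injective xiv)
    (c : Fin n → ℂ) (hc : ∃ j, c j ≠ 0) :
    ∫⁻ y in Ici (1 : ℝ),
        ENNReal.ofReal
          (‖∑ j, c j * (y : ℂ) ^ ((1 / 2 : ℂ) + (xiv j : ℂ) * I)‖ ^ 2 / y ^ 2) = ⊤ := by
  obtain ⟨j₀, hj₀⟩ := hc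
  set F : ℝ → ℝ := fun y =>
    ‖∑ j, c j * (y : ℂ) ^ ((1 / 2 : ℂ) + (xiv j : ℂ) * I)‖ ^ 2 / y ^ 2 with hF
  set A : ℝ := ∑ j, Complex.normSq (c j) with hA
  have hApos : 0 < A := Finset.sum_pos' (fun j _ => Complex.normSq_nonneg _)
    ⟨j₀, Finset.mem_univ _, Complex.normSq_pos.mpr hj₀⟩
  set B : Fin n → Fin n → ℝ := fun j k =>
    if j = k then 0 else ‖c j‖ * ‖c k‖ * (2 / |xiv j - xiv k|) with hB
  set C : ℝ := ∑ j, ∑ k, B j k with hC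
  have key2 : ∀ Y : ℝ, 1 ≤ Y → A * Real.log Y - C ≤ ∫ y in (1:ℝ)..Y, F y := by
    intro Y hY
    have hY0 : (0:ℝ) < Y := lt_of_lt_of_le one_pos hY
    have h0 : (0:ℝ) ∉ Set.uIcc 1 Y := by
      rw [Set.uIcc_of_le hY]
      rintro ⟨h1, -⟩; linarith
    have hint : ∀ r : ℂ, IntervalIntegrable (fun y : ℝ => (y:ℂ) ^ r) volume 1 Y :=
      fun r => intervalIntegral.intervalIntegrable_cpow (Or.inr h0)
    have hintt : ∀ j k : Fin n, IntervalIntegrable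
        (fun y : ℝ => c j * (starRingEnd ℂ) (c k) *
          (y:ℂ) ^ (((xiv j - xiv k : ℝ):ℂ) * I - 1)) volume 1 Y :=
      fun j k => (hint _).const_mul _
    set Jv : Fin n → Fin n → ℂ := fun j k =>
      if j = k then ((Real.log Y : ℝ) : ℂ)
      else ((Y:ℂ) ^ (((xiv j - xiv k : ℝ):ℂ) * I) - 1) / (((xiv j - xiv k : ℝ):ℂ) * I) with hJv
    have e1 : (∫ y in (1:ℝ)..Y, F y) =
        ∫ y in (1:ℝ)..Y, (∑ j, ∑ k, c j * (starRingEnd ℂ) (c k) *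
          (y : ℂ) ^ (((xiv j - xiv k : ℝ) : ℂ) * I - 1)).re := by
      refine intervalIntegral.integral_congr fun y hy => ?_
      rw [Set.uIcc_of_le hY] at hy
      exact pointwise_eq xiv c hy.1
    have hH : IntervalIntegrable (fun y : ℝ => ∑ j, ∑ k, c j * (starRingEnd ℂ) (c k) *
        (y : ℂ) ^ (((xiv j - xiv k : ℝ) : ℂ) * I - 1)) volume 1 Y :=
      intervalIntegrable_fun_sum _ fun j _ => intervalIntegrable_fun_sum _ fun k _ => hintt j k
    have e2 : (∫ y in (1:ℝ)..Y, (∑ j, ∑ k, c j * (starRingEnd ℂ) (c k) *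
        (y : ℂ) ^ (((xiv j - xiv k : ℝ) : ℂ) * I - 1)).re)
        = (∫ y in (1:ℝ)..Y, ∑ j, ∑ k, c j * (starRingEnd ℂ) (c k) *
        (y : ℂ) ^ (((xiv j - xiv k : ℝ) : ℂ) * I - 1)).re :=
      Complex.reCLM.intervalIntegral_comp_comm hH
    have e3 : (∫ y in (1:ℝ)..Y, ∑ j, ∑ k, c j * (starRingEnd ℂ) (c k) *
        (y : ℂ) ^ (((xiv j - xiv k : ℝ) : ℂ) * I - 1))
        = ∑ j, ∑ k, c j * (starRingEnd ℂ) (c k) * Jv j k := by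
      rw [intervalIntegral.integral_finset_sum
        (fun j _ => intervalIntegrable_fun_sum _ fun k _ => hintt j k)]
      refine Finset.sum_congr rfl fun j _ => ?_
      rw [intervalIntegral.integral_finset_sum (fun k _ => hintt j k)]
      refine Finset.sum_congr rfl fun k _ => ?_
      rw [intervalIntegral.integral_const_mul, cpow_int_aux _ hY, hJv]
      simp only [sub_eq_zero, hxiv.eq_iff]
    have hbound : ∀ j k : Fin n,
        (if j = k then Complex.normSq (c j) * Real.log Y else 0) - B j k
          ≤ (c j * (starRingEnd ℂ) (c k) * Jv j k).re := by
      intro j k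
      by_cases h : j = k
      · subst h
        have hBjj : B j j = 0 := by rw [hB]; simp
        have hJjj : Jv j j = ((Real.log Y : ℝ) : ℂ) := by rw [hJv]; simp
        rw [if_pos rfl, hBjj, sub_zero, hJjj, Complex.mul_conj, ← Complex.ofReal_mul,
          Complex.ofReal_re]
      · rw [if_neg h, zero_sub]
        have hα : xiv j - xiv k ≠ 0 := sub_ne_zero.mpr fun hh => h (hxiv hh)
        have hαpos : 0 < |xiv j - xiv k| := abs_pos.mpr hα
        have hJb : ‖Jv j k‖ ≤ 2 / |xiv j - xiv k| := by
          rw [hJv]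
          simp only [if_neg h]
          rw [norm_div]
          have hden : ‖((xiv j - xiv k : ℝ):ℂ) * I‖ = |xiv j - xiv k| := by
            rw [norm_mul, Complex.norm_I, Complex.norm_real, Real.norm_eq_abs, mul_one]
          rw [hden]
          have hnum : ‖(Y:ℂ) ^ (((xiv j - xiv k : ℝ):ℂ) * I) - 1‖ ≤ 2 := by
            have h1 : ‖(Y:ℂ) ^ (((xiv j - xiv k : ℝ):ℂ) * I)‖ = 1 := by
              rw [Complex.norm_cpow_eq_rpow_re_of_pos hY0]
              simp [Complex.mul_re]
            calc ‖(Y:ℂ) ^ (((xiv j - xiv k : ℝ):ℂ) * I) - 1‖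
                ≤ ‖(Y:ℂ) ^ (((xiv j - xiv k : ℝ):ℂ) * I)‖ + ‖(1:ℂ)‖ := by
                  simpa using
                    norm_sub_le ((Y:ℂ) ^ (((xiv j - xiv k : ℝ):ℂ) * I)) (1:ℂ)
              _ ≤ 2 := by rw [h1, norm_one]; norm_num
          gcongr
        have habs : ‖c j * (starRingEnd ℂ) (c k) * Jv j k‖
            ≤ ‖c j‖ * ‖c k‖ * (2 / |xiv j - xiv k|) := by
          rw [norm_mul, norm_mul, Complex.norm_conj]
          exact mul_le_mul_of_nonneg_left hJb
            (mul_nonneg (norm_nonneg _) (norm_nonneg _))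
        calc -(B j k) = -(‖c j‖ * ‖c k‖ * (2 / |xiv j - xiv k|)) := by
              rw [hB]; simp only [if_neg h]
          _ ≤ -(‖c j * (starRingEnd ℂ) (c k) * Jv j k‖) := neg_le_neg habs
          _ ≤ (c j * (starRingEnd ℂ) (c k) * Jv j k).re :=
              (abs_le.1 (Complex.abs_re_le_norm _)).1
    rw [e1, e2, e3]
    simp only [Complex.re_sum]
    calc A * Real.log Y - C
        = ∑ j, ∑ k, ((if j = k then Complex.normSq (c j) * Real.log Y else 0) - B j k) := by
          simp only [Finset.sum_sub_distrib]
          congr 1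
          rw [hA, Finset.sum_mul]
          refine Finset.sum_congr rfl fun j _ => ?_
          rw [Finset.sum_ite_eq, if_pos (Finset.mem_univ j)]
      _ ≤ ∑ j, ∑ k, (c j * (starRingEnd ℂ) (c k) * Jv j k).re :=
          Finset.sum_le_sum fun j _ => Finset.sum_le_sum fun k _ => hbound j k
  have key1 : ∀ Y : ℝ, 1 ≤ Y →
      ENNReal.ofReal (∫ y in (1:ℝ)..Y, F y) ≤ ∫⁻ y in Ici (1:ℝ), ENNReal.ofReal (F y) := by
    intro Y hY
    have hcont : ContinuousOn F (Icc 1 Y) := by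
      apply ContinuousOn.div
      · apply Continuous.continuousOn
        apply Continuous.pow
        apply continuous_norm.comp
        apply continuous_finset_sum
        intro j _
        refine continuous_const.mul (Complex.continuous_ofReal_cpow_const ?_)
        simp
      · exact (continuous_pow 2).continuousOn
      · intro y hy
        have : (1:ℝ) ≤ y := hy.1
        positivity
    have hInt : IntegrableOn F (Ioc 1 Y) volume :=
      (hcont.integrableOn_Icc).mono_set Ioc_subset_Icc_self
    have hnn : 0 ≤ᵐ[volume.restrict (Ioc 1 Y)] F :=
      Filter.Eventually.of_forall fun y =>
        div_nonneg (pow_nonneg (norm_nonneg _) 2) (sq_nonneg y)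
    calc ENNReal.ofReal (∫ y in (1:ℝ)..Y, F y)
        = ENNReal.ofReal (∫ y in Ioc 1 Y, F y) := by rw [intervalIntegral.integral_of_le hY]
      _ = ∫⁻ y in Ioc 1 Y, ENNReal.ofReal (F y) := ofReal_integral_eq_lintegral_ofReal hInt hnn
      _ ≤ ∫⁻ y in Ici 1, ENNReal.ofReal (F y) := lintegral_mono_set fun y hy => hy.1.le
  have htop : Tendsto (fun Y => ENNReal.ofReal (∫ y in (1:ℝ)..Y, F y)) atTop (𝓝 ⊤) := by
    apply ENNReal.tendsto_ofReal_atTop.comp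
    apply tendsto_atTop_mono' atTop ((eventually_ge_atTop 1).mono fun Y hY => key2 Y hY)
    have h1 : Tendsto (fun Y : ℝ => A * Real.log Y) atTop atTop :=
      Real.tendsto_log_atTop.const_mul_atTop hApos
    have h2 := tendsto_atTop_add_const_right atTop (-C) h1
    simpa [sub_eq_add_neg] using h2
  exact top_le_iff.mp (le_of_tendsto htop ((eventually_ge_atTop 1).mono fun Y hY => key1 Y hY))
end
end
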